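/- Let h_0 ∈ ℂ^K, x_0 ∈ ℂ^N with ‖h_0‖ = ‖x_0‖ = √d_0 > 0, let M ∈ ℂ^{K×N} satisfy ‖M − h_0x_0*‖ ≤ ξ·d_0 (operator norm) for some 0 ≤ ξ ≤ 1/10, and let d = ‖M‖. Suppose ĥ ∈ ℂ^K and x̂ ∈ ℂ^N are unit vectors such that ‖M − d·ĥx̂*‖ ≤ ‖M − Z‖ for every Z ∈ ℂ^{K×N} of rank at most one. Then: (i) |d − d_0| ≤ ξ·d_0; (ii) ‖d·ĥx̂* − h_0x_0*‖ ≤ 2ξ·d_0; and (iii) ‖(I_K − h_0h_0*/d_0)·ĥ‖ ≤ 2ξ. -/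

import Mathlib

noncomputable section
open Finset ComplexConjugate

namespace RGD

/-- Squared Euclidean norm of a complex vector. -/
def vnormSq {n : ℕ} (v : Fin n → ℂ) : ℝ := ∑ j, ‖v j‖ ^ 2

/-- Euclidean norm of a complex vector. -/
def vnorm {n : ℕ} (v : Fin n → ℂ) : ℝ := Real.sqrt (vnormSq v)

/-- Inner product, conjugate-linear in the first argument. -/
def vinner {n : ℕ} (u v : Fin n → ℂ) : ℂ := ∑ j, conj (u j) * v j

/-- Squared Frobenius norm of a matrix. -/
def frobSq {K N : ℕ} (Z : Matrix (Fin K) (Fin N) ℂ) : ℝ := ∑ k, ∑ j, ‖Z k j‖ ^ 2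

/-- Frobenius norm of a matrix. -/
def frob {K N : ℕ} (Z : Matrix (Fin K) (Fin N) ℂ) : ℝ := Real.sqrt (frobSq Z)

/-- Frobenius inner product `⟨U,V⟩ = Tr(U*V)`, conjugate-linear in the first argument. -/
def finner {K N : ℕ} (U V : Matrix (Fin K) (Fin N) ℂ) : ℂ := ∑ k, ∑ j, conj (U k j) * V k j

/-- Spectral (operator) norm of a matrix: sup of `‖Zv‖` over the closed unit ball. -/
def opNorm {K N : ℕ} (Z : Matrix (Fin K) (Fin N) ℂ) : ℝ :=
  sSup {r : ℝ | ∃ v : Fin N → ℂ, vnorm v ≤ 1 ∧ r = vnorm (Z.mulVec v)}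

/-- Squared Frobenius norm of a block-diagonal matrix, given by its diagonal blocks. -/
def famFrobSq {K N s : ℕ} (Z : Fin s → Matrix (Fin K) (Fin N) ℂ) : ℝ := ∑ i, frobSq (Z i)

/-- Frobenius norm of a block-diagonal matrix, given by its diagonal blocks. -/
def famFrob {K N s : ℕ} (Z : Fin s → Matrix (Fin K) (Fin N) ℂ) : ℝ := Real.sqrt (famFrobSq Z)

/-- The rank-one matrix `u v*`. -/
def rankOne {K N : ℕ} (u : Fin K → ℂ) (v : Fin N → ℂ) : Matrix (Fin K) (Fin N) ℂ :=
  Matrix.of fun k j => u k * conj (v j)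

/-- `ℋ(h,x)`: block-diagonal matrix with `i`-th block `hᵢ xᵢ*`. -/
def Hmap {K N s : ℕ} (h : Fin s → Fin K → ℂ) (x : Fin s → Fin N → ℂ) :
    Fin s → Matrix (Fin K) (Fin N) ℂ := fun i => rankOne (h i) (x i)

/-- `𝒜ᵢ(Z) = (bₗ* Z aₗ)ₗ`. -/
def calAi {K N L : ℕ} (b : Fin L → Fin K → ℂ) (a : Fin L → Fin N → ℂ)
    (Z : Matrix (Fin K) (Fin N) ℂ) : Fin L → ℂ :=
  fun l => vinner (b l) (Z.mulVec (a l))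

/-- `𝒜(Z) = Σᵢ 𝒜ᵢ(Zᵢ)` on block-diagonal matrices. -/
def calA {K N L s : ℕ} (b : Fin L → Fin K → ℂ) (a : Fin s → Fin L → Fin N → ℂ)
    (Z : Fin s → Matrix (Fin K) (Fin N) ℂ) : Fin L → ℂ :=
  fun l => ∑ i, calAi b (a i) (Z i) l

/-- `𝒜ᵢ*(z) = Σₗ zₗ bₗ aₗ*`. -/
def calAdj {K N L : ℕ} (b : Fin L → Fin K → ℂ) (a : Fin L → Fin N → ℂ)
    (z : Fin L → ℂ) : Matrix (Fin K) (Fin N) ℂ :=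
  Matrix.of fun k j => ∑ l, z l * b l k * conj (a l j)

/-- `‖𝒜*(e)‖ = maxᵢ ‖𝒜ᵢ*(e)‖` (operator norms). -/
def AadjNorm {K N L s : ℕ} (b : Fin L → Fin K → ℂ) (a : Fin s → Fin L → Fin N → ℂ)
    (e : Fin L → ℂ) : ℝ :=
  ⨆ i : Fin s, opNorm (calAdj b (a i) e)

/-- `B*B = I_K`, expressed in terms of the columns `bₗ` of `B*`. -/
def BtBeqI {K L : ℕ} (b : Fin L → Fin K → ℂ) : Prop :=
  ∀ k k' : Fin K, (∑ l, b l k * conj (b l k')) = if k = k' then (1 : ℂ) else 0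

/-- `μ ≥ μ_h`, i.e. `√L ‖B h_{i0}‖_∞ ≤ μ ‖h_{i0}‖` for all `i`. -/
def muhLe {K L s : ℕ} (b : Fin L → Fin K → ℂ) (h0 : Fin s → Fin K → ℂ) (μ : ℝ) : Prop :=
  ∀ i l, Real.sqrt L * ‖vinner (b l) (h0 i)‖ ≤ μ * vnorm (h0 i)

/-- `d₀ = √(Σᵢ d_{i0}²)`. -/
def dtot {s : ℕ} (d0 : Fin s → ℝ) : ℝ := Real.sqrt (∑ i, d0 i ^ 2)

/-- Condition number `κ = (maxᵢ d_{i0}) / (minᵢ d_{i0})`. -/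
def kappa {s : ℕ} (d0 : Fin s → ℝ) : ℝ := (⨆ i, d0 i) / (⨅ i, d0 i)

/-- The observation `y = 𝒜(ℋ(h₀,x₀)) + e`. -/
def yvec {K N L s : ℕ} (b : Fin L → Fin K → ℂ) (a : Fin s → Fin L → Fin N → ℂ)
    (h0 : Fin s → Fin K → ℂ) (x0 : Fin s → Fin N → ℂ) (e : Fin L → ℂ) : Fin L → ℂ :=
  fun l => calA b a (Hmap h0 x0) l + e l

/-- `F(h,x) = ‖𝒜(ℋ(h,x)) − y‖²`. -/
def Fobj {K N L s : ℕ} (b : Fin L → Fin K → ℂ) (a : Fin s → Fin L → Fin N → ℂ)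
    (h0 : Fin s → Fin K → ℂ) (x0 : Fin s → Fin N → ℂ) (e : Fin L → ℂ)
    (h : Fin s → Fin K → ℂ) (x : Fin s → Fin N → ℂ) : ℝ :=
  vnormSq (fun l => calA b a (Hmap h x) l - yvec b a h0 x0 e l)

def G0 (z : ℝ) : ℝ := max (z - 1) 0 ^ 2

def G0' (z : ℝ) : ℝ := 2 * max (z - 1) 0

/-- The `i`-th regularizer `Gᵢ(hᵢ,xᵢ)` (including the factor `ρ`). -/
def Gi {K N L : ℕ} (b : Fin L → Fin K → ℂ) (ρ μ di : ℝ)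
    (hi : Fin K → ℂ) (xi : Fin N → ℂ) : ℝ :=
  ρ * (G0 (vnormSq hi / (2 * di)) + G0 (vnormSq xi / (2 * di))
    + ∑ l, G0 ((L : ℝ) * ‖vinner (b l) hi‖ ^ 2 / (8 * di * μ ^ 2)))

/-- The regularizer `G(h,x) = Σᵢ Gᵢ(hᵢ,xᵢ)`. -/
def Greg {K N L s : ℕ} (b : Fin L → Fin K → ℂ) (ρ μ : ℝ) (dd : Fin s → ℝ)
    (h : Fin s → Fin K → ℂ) (x : Fin s → Fin N → ℂ) : ℝ :=
  ∑ i, Gi b ρ μ (dd i) (h i) (x i)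

/-- `F̃ = F + G`. -/
def Ftil {K N L s : ℕ} (b : Fin L → Fin K → ℂ) (a : Fin s → Fin L → Fin N → ℂ)
    (h0 : Fin s → Fin K → ℂ) (x0 : Fin s → Fin N → ℂ) (e : Fin L → ℂ)
    (ρ μ : ℝ) (dd : Fin s → ℝ)
    (h : Fin s → Fin K → ℂ) (x : Fin s → Fin N → ℂ) : ℝ :=
  Fobj b a h0 x0 e h x + Greg b ρ μ dd h x

/-- The residual `𝒜(ℋ(h,x)) − y`. -/
def residual {K N L s : ℕ} (b : Fin L → Fin K → ℂ) (a : Fin s → Fin L → Fin N → ℂ)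
    (h0 : Fin s → Fin K → ℂ) (x0 : Fin s → Fin N → ℂ) (e : Fin L → ℂ)
    (h : Fin s → Fin K → ℂ) (x : Fin s → Fin N → ℂ) : Fin L → ℂ :=
  fun l => calA b a (Hmap h x) l - yvec b a h0 x0 e l

/-- Wirtinger gradient `∇F_{hᵢ} = 𝒜ᵢ*(𝒜(ℋ(h,x)) − y) xᵢ`. -/
def gradFh {K N L s : ℕ} (b : Fin L → Fin K → ℂ) (a : Fin s → Fin L → Fin N → ℂ)
    (h0 : Fin s → Fin K → ℂ) (x0 : Fin s → Fin N → ℂ) (e : Fin L → ℂ)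
    (h : Fin s → Fin K → ℂ) (x : Fin s → Fin N → ℂ) (i : Fin s) : Fin K → ℂ :=
  (calAdj b (a i) (residual b a h0 x0 e h x)).mulVec (x i)

/-- Wirtinger gradient `∇F_{xᵢ} = (𝒜ᵢ*(𝒜(ℋ(h,x)) − y))* hᵢ`. -/
def gradFx {K N L s : ℕ} (b : Fin L → Fin K → ℂ) (a : Fin s → Fin L → Fin N → ℂ)
    (h0 : Fin s → Fin K → ℂ) (x0 : Fin s → Fin N → ℂ) (e : Fin L → ℂ)
    (h : Fin s → Fin K → ℂ) (x : Fin s → Fin N → ℂ) (i : Fin s) : Fin N → ℂ :=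
  (calAdj b (a i) (residual b a h0 x0 e h x)).conjTranspose.mulVec (h i)

/-- Wirtinger gradient `∇G_{hᵢ}`. -/
def gradGh {K L s : ℕ} (b : Fin L → Fin K → ℂ) (ρ μ : ℝ) (dd : Fin s → ℝ)
    (h : Fin s → Fin K → ℂ) (i : Fin s) : Fin K → ℂ :=
  fun k => ((ρ / (2 * dd i) : ℝ) : ℂ) *
    (((G0' (vnormSq (h i) / (2 * dd i)) : ℝ) : ℂ) * h i k
      + (((L : ℝ) / (4 * μ ^ 2) : ℝ) : ℂ) *
        ∑ l, ((G0' ((L : ℝ) * ‖vinner (b l) (h i)‖ ^ 2 / (8 * dd i * μ ^ 2)) : ℝ) : ℂ)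
          * (vinner (b l) (h i) * b l k))

/-- Wirtinger gradient `∇G_{xᵢ}`. -/
def gradGx {N s : ℕ} (ρ : ℝ) (dd : Fin s → ℝ)
    (x : Fin s → Fin N → ℂ) (i : Fin s) : Fin N → ℂ :=
  fun j => ((ρ / (2 * dd i) : ℝ) : ℂ) * (((G0' (vnormSq (x i) / (2 * dd i)) : ℝ) : ℂ) * x i j)

/-- `∇F̃_{hᵢ} = ∇F_{hᵢ} + ∇G_{hᵢ}`. -/
def gradH {K N L s : ℕ} (b : Fin L → Fin K → ℂ) (a : Fin s → Fin L → Fin N → ℂ)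
    (h0 : Fin s → Fin K → ℂ) (x0 : Fin s → Fin N → ℂ) (e : Fin L → ℂ)
    (ρ μ : ℝ) (dd : Fin s → ℝ)
    (h : Fin s → Fin K → ℂ) (x : Fin s → Fin N → ℂ) (i : Fin s) : Fin K → ℂ :=
  fun k => gradFh b a h0 x0 e h x i k + gradGh b ρ μ dd h i k

/-- `∇F̃_{xᵢ} = ∇F_{xᵢ} + ∇G_{xᵢ}`. -/
def gradX {K N L s : ℕ} (b : Fin L → Fin K → ℂ) (a : Fin s → Fin L → Fin N → ℂ)
    (h0 : Fin s → Fin K → ℂ) (x0 : Fin s → Fin N → ℂ) (e : Fin L → ℂ)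
    (ρ μ : ℝ) (dd : Fin s → ℝ)
    (h : Fin s → Fin K → ℂ) (x : Fin s → Fin N → ℂ) (i : Fin s) : Fin N → ℂ :=
  fun j => gradFx b a h0 x0 e h x i j + gradGx ρ dd x i j

/-- `‖∇F̃(h,x)‖²` (squared norm of the stacked Wirtinger gradient). -/
def gradNormSq {K N L s : ℕ} (b : Fin L → Fin K → ℂ) (a : Fin s → Fin L → Fin N → ℂ)
    (h0 : Fin s → Fin K → ℂ) (x0 : Fin s → Fin N → ℂ) (e : Fin L → ℂ)
    (ρ μ : ℝ) (dd : Fin s → ℝ)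
    (h : Fin s → Fin K → ℂ) (x : Fin s → Fin N → ℂ) : ℝ :=
  ∑ i, vnormSq (gradH b a h0 x0 e ρ μ dd h x i) + ∑ i, vnormSq (gradX b a h0 x0 e ρ μ dd h x i)

/-- `‖∇F̃(h',x') − ∇F̃(h,x)‖²`. -/
def gradDiffNormSq {K N L s : ℕ} (b : Fin L → Fin K → ℂ) (a : Fin s → Fin L → Fin N → ℂ)
    (h0 : Fin s → Fin K → ℂ) (x0 : Fin s → Fin N → ℂ) (e : Fin L → ℂ)
    (ρ μ : ℝ) (dd : Fin s → ℝ)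
    (h : Fin s → Fin K → ℂ) (x : Fin s → Fin N → ℂ)
    (h' : Fin s → Fin K → ℂ) (x' : Fin s → Fin N → ℂ) : ℝ :=
  ∑ i, vnormSq (fun k => gradH b a h0 x0 e ρ μ dd h' x' i k - gradH b a h0 x0 e ρ μ dd h x i k)
  + ∑ i, vnormSq (fun j => gradX b a h0 x0 e ρ μ dd h' x' i j - gradX b a h0 x0 e ρ μ dd h x i j)

/-- Membership in `𝒩_d`. -/
def inNd {K N s : ℕ} (d0 : Fin s → ℝ)
    (h : Fin s → Fin K → ℂ) (x : Fin s → Fin N → ℂ) : Prop :=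
  ∀ i, vnorm (h i) ≤ 2 * Real.sqrt (d0 i) ∧ vnorm (x i) ≤ 2 * Real.sqrt (d0 i)

/-- Membership in `𝒩_μ`. -/
def inNmu {K L s : ℕ} (b : Fin L → Fin K → ℂ) (d0 : Fin s → ℝ) (μ : ℝ)
    (h : Fin s → Fin K → ℂ) : Prop :=
  ∀ i, ∀ l, Real.sqrt L * ‖vinner (b l) (h i)‖ ≤ 4 * Real.sqrt (d0 i) * μ

/-- `δᵢ(hᵢ,xᵢ) = ‖hᵢxᵢ* − h_{i0}x_{i0}*‖_F / d_{i0}`. -/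
def deltaI {K N : ℕ} (h0i : Fin K → ℂ) (x0i : Fin N → ℂ) (d0i : ℝ)
    (hi : Fin K → ℂ) (xi : Fin N → ℂ) : ℝ :=
  frob (rankOne hi xi - rankOne h0i x0i) / d0i

/-- Membership in `𝒩_ε`. -/
def inNeps {K N s : ℕ} (h0 : Fin s → Fin K → ℂ) (x0 : Fin s → Fin N → ℂ)
    (d0 : Fin s → ℝ) (ε : ℝ)
    (h : Fin s → Fin K → ℂ) (x : Fin s → Fin N → ℂ) : Prop :=
  ∀ i, deltaI (h0 i) (x0 i) (d0 i) (h i) (x i) ≤ ε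

/-- The global relative error `δ(h,x) = ‖ℋ(h,x) − X₀‖_F / d₀`. -/
def deltaTot {K N s : ℕ} (h0 : Fin s → Fin K → ℂ) (x0 : Fin s → Fin N → ℂ)
    (d0 : Fin s → ℝ)
    (h : Fin s → Fin K → ℂ) (x : Fin s → Fin N → ℂ) : ℝ :=
  famFrob (fun i => Hmap h x i - Hmap h0 x0 i) / dtot d0

/-- Membership in `𝒩_F̃`. -/
def inNF {K N L s : ℕ} (b : Fin L → Fin K → ℂ) (a : Fin s → Fin L → Fin N → ℂ)
    (h0 : Fin s → Fin K → ℂ) (x0 : Fin s → Fin N → ℂ) (e : Fin L → ℂ)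
    (d0 : Fin s → ℝ) (ρ μ : ℝ) (dd : Fin s → ℝ) (ε : ℝ)
    (h : Fin s → Fin K → ℂ) (x : Fin s → Fin N → ℂ) : Prop :=
  Ftil b a h0 x0 e ρ μ dd h x ≤ ε ^ 2 * dtot d0 ^ 2 / (3 * (s : ℝ) * kappa d0 ^ 2) + vnormSq e

/-- The Local Restricted Isometry Property on `𝒩_d ∩ 𝒩_μ ∩ 𝒩_ε`. -/
def LocalRIP {K N L s : ℕ} (b : Fin L → Fin K → ℂ) (a : Fin s → Fin L → Fin N → ℂ)
    (h0 : Fin s → Fin K → ℂ) (x0 : Fin s → Fin N → ℂ)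
    (d0 : Fin s → ℝ) (μ ε : ℝ) : Prop :=
  ∀ (h : Fin s → Fin K → ℂ) (x : Fin s → Fin N → ℂ),
    inNd d0 h x → inNmu b d0 μ h → inNeps h0 x0 d0 ε h x →
      (2 / 3) * famFrobSq (fun i => Hmap h x i - Hmap h0 x0 i)
          ≤ vnormSq (calA b a fun i => Hmap h x i - Hmap h0 x0 i)
      ∧ vnormSq (calA b a fun i => Hmap h x i - Hmap h0 x0 i)
          ≤ (3 / 2) * famFrobSq (fun i => Hmap h x i - Hmap h0 x0 i)

/-- `α_{i1} = ⟨h_{i0}, hᵢ⟩ / d_{i0}`. -/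
def alpha1 {K s : ℕ} (h0 : Fin s → Fin K → ℂ) (d0 : Fin s → ℝ)
    (h : Fin s → Fin K → ℂ) (i : Fin s) : ℂ :=
  vinner (h0 i) (h i) / ((d0 i : ℝ) : ℂ)

/-- `α_{i2} = ⟨x_{i0}, xᵢ⟩ / d_{i0}`. -/
def alpha2 {N s : ℕ} (x0 : Fin s → Fin N → ℂ) (d0 : Fin s → ℝ)
    (x : Fin s → Fin N → ℂ) (i : Fin s) : ℂ :=
  vinner (x0 i) (x i) / ((d0 i : ℝ) : ℂ)

/-- `δ₀ = δ/10`. -/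
def delta0 {K N s : ℕ} (h0 : Fin s → Fin K → ℂ) (x0 : Fin s → Fin N → ℂ)
    (d0 : Fin s → ℝ) (h : Fin s → Fin K → ℂ) (x : Fin s → Fin N → ℂ) : ℝ :=
  deltaTot h0 x0 d0 h x / 10

/-- `αᵢ = (1−δ₀)α_{i1}` if `‖hᵢ‖ ≥ ‖xᵢ‖`, else `1/((1−δ₀) conj(α_{i2}))`. -/
def alphaC {K N s : ℕ} (h0 : Fin s → Fin K → ℂ) (x0 : Fin s → Fin N → ℂ)
    (d0 : Fin s → ℝ) (h : Fin s → Fin K → ℂ) (x : Fin s → Fin N → ℂ) (i : Fin s) : ℂ :=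
  if vnorm (x i) ≤ vnorm (h i)
  then ((1 - delta0 h0 x0 d0 h x : ℝ) : ℂ) * alpha1 h0 d0 h i
  else 1 / (((1 - delta0 h0 x0 d0 h x : ℝ) : ℂ) * conj (alpha2 x0 d0 x i))

/-- `Δhᵢ = hᵢ − αᵢ h_{i0}`. -/
def dh {K N s : ℕ} (h0 : Fin s → Fin K → ℂ) (x0 : Fin s → Fin N → ℂ)
    (d0 : Fin s → ℝ) (h : Fin s → Fin K → ℂ) (x : Fin s → Fin N → ℂ) (i : Fin s) :
    Fin K → ℂ :=
  fun k => h i k - alphaC h0 x0 d0 h x i * h0 i k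

/-- `Δxᵢ = xᵢ − conj(αᵢ)⁻¹ x_{i0}`. -/
def dx {K N s : ℕ} (h0 : Fin s → Fin K → ℂ) (x0 : Fin s → Fin N → ℂ)
    (d0 : Fin s → ℝ) (h : Fin s → Fin K → ℂ) (x : Fin s → Fin N → ℂ) (i : Fin s) :
    Fin N → ℂ :=
  fun j => x i j - (conj (alphaC h0 x0 d0 h x i))⁻¹ * x0 i j

/-- `σ²_max(h,x) = maxₗ Σᵢ |bₗ*hᵢ|² ‖xᵢ‖²`. -/
def sigmaMaxSq {K N L s : ℕ} (b : Fin L → Fin K → ℂ)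
    (h : Fin s → Fin K → ℂ) (x : Fin s → Fin N → ℂ) : ℝ :=
  ⨆ l : Fin L, ∑ i, ‖vinner (b l) (h i)‖ ^ 2 * vnormSq (x i)

/-- The rank-one bound (Lemma: `𝒜` on block-diagonal matrices with rank-1 blocks). -/
def RankOneBound {K N L s : ℕ} (b : Fin L → Fin K → ℂ)
    (a : Fin s → Fin L → Fin N → ℂ) : Prop :=
  ∀ (h : Fin s → Fin K → ℂ) (x : Fin s → Fin N → ℂ),
    vnormSq (calA b a (Hmap h x)) ≤
      4 / 3 * famFrobSq (Hmap h x)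
      + 2 * Real.sqrt (2 * (s : ℝ) * famFrobSq (Hmap h x) * sigmaMaxSq b h x
          * ((K : ℝ) + N) * Real.log L)
      + 8 * (s : ℝ) * sigmaMaxSq b h x * ((K : ℝ) + N) * Real.log L

/-- The subspace `Tᵢ = {h_{i0} v* + u x_{i0}*}`. -/
def Tspace {K N : ℕ} (h0i : Fin K → ℂ) (x0i : Fin N → ℂ) :
    Set (Matrix (Fin K) (Fin N) ℂ) :=
  {Z | ∃ (u : Fin K → ℂ) (v : Fin N → ℂ), Z = rankOne h0i v + rankOne u x0i}

/-- `P` is the orthogonal projection onto `Tᵢ` w.r.t. the Frobenius inner product. -/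
def IsFrobProj {K N : ℕ} (h0i : Fin K → ℂ) (x0i : Fin N → ℂ)
    (P : Matrix (Fin K) (Fin N) ℂ → Matrix (Fin K) (Fin N) ℂ) : Prop :=
  ∀ Z, P Z ∈ Tspace h0i x0i ∧ ∀ W ∈ Tspace h0i x0i, finner W (Z - P Z) = 0

/-- Operator norm of `𝒜ᵢ` from `(ℂ^{K×N}, ‖·‖_F)` to `(ℂ^L, ‖·‖)`. -/
def calAiOpNorm {K N L : ℕ} (b : Fin L → Fin K → ℂ) (a : Fin L → Fin N → ℂ) : ℝ :=
  sSup {r : ℝ | ∃ Z : Matrix (Fin K) (Fin N) ℂ, frob Z ≤ 1 ∧ r = vnorm (calAi b a Z)}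

/-- Operator norm of `𝒜` from block-diagonal matrices with `‖·‖_F` to `ℂ^L`. -/
def calAOpNorm {K N L s : ℕ} (b : Fin L → Fin K → ℂ)
    (a : Fin s → Fin L → Fin N → ℂ) : ℝ :=
  sSup {r : ℝ | ∃ Z : Fin s → Matrix (Fin K) (Fin N) ℂ, famFrob Z ≤ 1 ∧ r = vnorm (calA b a Z)}

/-- Norm of a stacked vector in `ℂ^{ns}`. -/
def stackNorm {n s : ℕ} (u : Fin s → Fin n → ℂ) : ℝ := Real.sqrt (∑ i, vnormSq (u i))

/-- Norm of a point `z = (h,x) ∈ ℂ^{s(K+N)}`. -/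
def pairNorm {K N s : ℕ} (u : Fin s → Fin K → ℂ) (v : Fin s → Fin N → ℂ) : ℝ :=
  Real.sqrt (∑ i, vnormSq (u i) + ∑ i, vnormSq (v i))

/-- `z + t • w` componentwise, `t` real. -/
def shiftV {n s : ℕ} (u w : Fin s → Fin n → ℂ) (t : ℝ) : Fin s → Fin n → ℂ :=
  fun i k => u i k + (t : ℂ) * w i k

/-- `σ_max(h) = maxₗ √(Σᵢ |bₗ*hᵢ|²)` (unit `xᵢ`'s). -/
def sigmaMaxU {K L s : ℕ} (b : Fin L → Fin K → ℂ) (h : Fin s → Fin K → ℂ) : ℝ :=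
  ⨆ l, Real.sqrt (∑ i, ‖vinner (b l) (h i)‖ ^ 2)

lemma frobSq_nonneg {K N : ℕ} (Z : Matrix (Fin K) (Fin N) ℂ) : 0 ≤ frobSq Z :=
  Finset.sum_nonneg fun _ _ => Finset.sum_nonneg fun _ _ => by positivity

open scoped InnerProductSpace
open Matrix

def toE {n : ℕ} (v : Fin n → ℂ) : EuclideanSpace ℂ (Fin n) :=
  (WithLp.equiv 2 (∀ _ : Fin n, ℂ)).symm v

lemma vnorm_eq {n : ℕ} (v : Fin n → ℂ) : vnorm v = ‖toE v‖ := by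
  rw [EuclideanSpace.norm_eq]; rfl

lemma vnormSq_nonneg {n : ℕ} (v : Fin n → ℂ) : 0 ≤ vnormSq v :=
  Finset.sum_nonneg fun _ _ => by positivity

lemma vnorm_nonneg {n : ℕ} (v : Fin n → ℂ) : 0 ≤ vnorm v := Real.sqrt_nonneg _

lemma vnorm_sq {n : ℕ} (v : Fin n → ℂ) : vnorm v ^ 2 = vnormSq v :=
  Real.sq_sqrt (vnormSq_nonneg v)

lemma vinner_eq {n : ℕ} (u v : Fin n → ℂ) : vinner u v = ⟪toE u, toE v⟫_ℂ := by
  rw [PiLp.inner_apply]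
  simp only [RCLike.inner_apply]
  exact Finset.sum_congr rfl fun j _ => mul_comm _ _

lemma vinner_le {n : ℕ} (u v : Fin n → ℂ) : ‖vinner u v‖ ≤ vnorm u * vnorm v := by
  rw [vinner_eq, vnorm_eq, vnorm_eq]; exact norm_inner_le_norm _ _

lemma vinner_self {n : ℕ} (v : Fin n → ℂ) : vinner v v = ((vnormSq v : ℝ) : ℂ) := by
  rw [vinner_eq, inner_self_eq_norm_sq_to_K, ← vnorm_eq]
  norm_cast
  exact congrArg _ (vnorm_sq v)

lemma vnorm_zero {n : ℕ} : vnorm (0 : Fin n → ℂ) = 0 := by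
  simp [vnorm, vnormSq]

lemma vnorm_eq_zero {n : ℕ} {v : Fin n → ℂ} (h : vnorm v = 0) : v = 0 := by
  rw [vnorm_eq, norm_eq_zero] at h
  funext k
  exact congrFun (congrArg WithLp.ofLp h) k

lemma vnorm_smul {n : ℕ} (c : ℂ) (v : Fin n → ℂ) :
    vnorm (fun j => c * v j) = ‖c‖ * vnorm v := by
  rw [vnorm_eq, vnorm_eq]
  have : toE (fun j => c * v j) = c • toE v := rfl
  rw [this, norm_smul]

lemma mulVec_entry {K N : ℕ} (Z : Matrix (Fin K) (Fin N) ℂ) (v : Fin N → ℂ) (k : Fin K) :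
    (Z *ᵥ v) k = ∑ j, Z k j * v j := rfl

lemma vnorm_mulVec_le_frob {K N : ℕ} (Z : Matrix (Fin K) (Fin N) ℂ) (v : Fin N → ℂ) :
    vnorm (Z *ᵥ v) ≤ frob Z * vnorm v := by
  have hentry : ∀ k, ‖(Z *ᵥ v) k‖ ^ 2 ≤ (∑ j, ‖Z k j‖ ^ 2) * vnormSq v := by
    intro k
    have h1 : (Z *ᵥ v) k = vinner (fun j => conj (Z k j)) v := by
      rw [mulVec_entry, vinner]
      simp
    have h2 : ‖(Z *ᵥ v) k‖ ≤ vnorm (fun j => conj (Z k j)) * vnorm v := by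
      rw [h1]; exact vinner_le _ _
    have h3 : vnormSq (fun j => conj (Z k j)) = ∑ j, ‖Z k j‖ ^ 2 := by
      simp [vnormSq]
    calc ‖(Z *ᵥ v) k‖ ^ 2 ≤ (vnorm (fun j => conj (Z k j)) * vnorm v) ^ 2 := by
          have := norm_nonneg ((Z *ᵥ v) k)
          nlinarith [h2, norm_nonneg ((Z *ᵥ v) k), mul_nonneg (vnorm_nonneg (fun j => conj (Z k j))) (vnorm_nonneg v)]
      _ = vnormSq (fun j => conj (Z k j)) * vnormSq v := by
          rw [mul_pow, vnorm_sq, vnorm_sq]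
      _ = (∑ j, ‖Z k j‖ ^ 2) * vnormSq v := by rw [h3]
  have hsq : vnormSq (Z *ᵥ v) ≤ frobSq Z * vnormSq v := by
    rw [vnormSq, frobSq, Finset.sum_mul]
    exact Finset.sum_le_sum fun k _ => hentry k
  have h4 : vnorm (Z *ᵥ v) ≤ Real.sqrt (frobSq Z * vnormSq v) :=
    Real.sqrt_le_sqrt hsq
  calc vnorm (Z *ᵥ v) ≤ Real.sqrt (frobSq Z * vnormSq v) := h4
    _ = frob Z * vnorm v := by
        rw [Real.sqrt_mul (frobSq_nonneg Z)]; rfl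

def opSet {K N : ℕ} (Z : Matrix (Fin K) (Fin N) ℂ) : Set ℝ :=
  {r : ℝ | ∃ v : Fin N → ℂ, vnorm v ≤ 1 ∧ r = vnorm (Z.mulVec v)}

lemma opNorm_eq_sSup {K N : ℕ} (Z : Matrix (Fin K) (Fin N) ℂ) : opNorm Z = sSup (opSet Z) := rfl

lemma zero_mem_opSet {K N : ℕ} (Z : Matrix (Fin K) (Fin N) ℂ) : (0:ℝ) ∈ opSet Z :=
  ⟨0, by rw [vnorm_zero]; norm_num, by rw [Matrix.mulVec_zero, vnorm_zero]⟩

lemma opSet_bddAbove {K N : ℕ} (Z : Matrix (Fin K) (Fin N) ℂ) : BddAbove (opSet Z) := by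
  refine ⟨frob Z, ?_⟩
  rintro r ⟨v, hv, rfl⟩
  calc vnorm (Z *ᵥ v) ≤ frob Z * vnorm v := vnorm_mulVec_le_frob Z v
    _ ≤ frob Z * 1 := by
        exact mul_le_mul_of_nonneg_left hv (Real.sqrt_nonneg _)
    _ = frob Z := mul_one _

lemma opNorm_nonneg' {K N : ℕ} (Z : Matrix (Fin K) (Fin N) ℂ) : 0 ≤ opNorm Z :=
  le_csSup (opSet_bddAbove Z) (zero_mem_opSet Z)

lemma opNorm_le {K N : ℕ} (Z : Matrix (Fin K) (Fin N) ℂ) {C : ℝ}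
    (h : ∀ v, vnorm v ≤ 1 → vnorm (Z *ᵥ v) ≤ C) : opNorm Z ≤ C := by
  rw [opNorm_eq_sSup]
  apply csSup_le ⟨0, zero_mem_opSet Z⟩
  rintro r ⟨v, hv, rfl⟩
  exact h v hv

lemma le_opNorm {K N : ℕ} (Z : Matrix (Fin K) (Fin N) ℂ) (v : Fin N → ℂ) :
    vnorm (Z *ᵥ v) ≤ opNorm Z * vnorm v := by
  by_cases hv : vnorm v = 0
  · have : v = 0 := vnorm_eq_zero hv
    rw [this, Matrix.mulVec_zero, vnorm_zero]
    have h0 : (0:ℝ) ≤ opNorm Z * vnorm (0 : Fin N → ℂ) :=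
      mul_nonneg (opNorm_nonneg' Z) (vnorm_nonneg _)
    exact h0
  · have hpos : 0 < vnorm v := lt_of_le_of_ne (vnorm_nonneg v) (Ne.symm hv)
    set c : ℝ := (vnorm v)⁻¹ with hc
    have hcpos : 0 < c := inv_pos.mpr hpos
    have hw : vnorm (fun j => (c:ℂ) * v j) = 1 := by
      rw [vnorm_smul, Complex.norm_real, Real.norm_eq_abs, abs_of_pos hcpos, hc,
        inv_mul_cancel₀ (ne_of_gt hpos)]
    have hZw : Z *ᵥ (fun j => (c:ℂ) * v j) = fun k => (c:ℂ) * (Z *ᵥ v) k := by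
      funext k
      rw [mulVec_entry, mulVec_entry, Finset.mul_sum]
      congr 1; funext j; ring
    have hmem : c * vnorm (Z *ᵥ v) ∈ opSet Z := by
      refine ⟨fun j => (c:ℂ) * v j, le_of_eq hw, ?_⟩
      rw [hZw, vnorm_smul, Complex.norm_real, Real.norm_eq_abs, abs_of_pos hcpos]
    have := le_csSup (opSet_bddAbove Z) hmem
    calc vnorm (Z *ᵥ v) = vnorm v * (c * vnorm (Z *ᵥ v)) := by
          rw [hc, ← mul_assoc, mul_inv_cancel₀ (ne_of_gt hpos), one_mul]
      _ ≤ vnorm v * opNorm Z := by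
          exact mul_le_mul_of_nonneg_left this (le_of_lt hpos)
      _ = opNorm Z * vnorm v := mul_comm _ _

lemma vnorm_add_le {n : ℕ} (u v : Fin n → ℂ) : vnorm (fun k => u k + v k) ≤ vnorm u + vnorm v := by
  rw [vnorm_eq, vnorm_eq, vnorm_eq]
  exact norm_add_le (toE u) (toE v)

lemma opNorm_add_le {K N : ℕ} (A B : Matrix (Fin K) (Fin N) ℂ) :
    opNorm (A + B) ≤ opNorm A + opNorm B := by
  apply opNorm_le
  intro v hv
  have h1 : (A + B) *ᵥ v = fun k => (A *ᵥ v) k + (B *ᵥ v) k := by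
    funext k; rw [Matrix.add_mulVec]; rfl
  rw [h1]
  calc vnorm (fun k => (A *ᵥ v) k + (B *ᵥ v) k) ≤ vnorm (A *ᵥ v) + vnorm (B *ᵥ v) :=
        vnorm_add_le _ _
    _ ≤ opNorm A * vnorm v + opNorm B * vnorm v := add_le_add (le_opNorm A v) (le_opNorm B v)
    _ ≤ opNorm A * 1 + opNorm B * 1 := add_le_add
        (mul_le_mul_of_nonneg_left hv (opNorm_nonneg' A))
        (mul_le_mul_of_nonneg_left hv (opNorm_nonneg' B))
    _ = opNorm A + opNorm B := by ring

lemma vnorm_neg {n : ℕ} (v : Fin n → ℂ) : vnorm (fun k => -(v k)) = vnorm v := by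
  rw [vnorm_eq, vnorm_eq]
  have : toE (fun k => -(v k)) = -(toE v) := rfl
  rw [this, norm_neg]

lemma vnorm_mulVec_sub_comm {K N : ℕ} (A B : Matrix (Fin K) (Fin N) ℂ) (v : Fin N → ℂ) :
    vnorm ((A - B) *ᵥ v) = vnorm ((B - A) *ᵥ v) := by
  have h1 : (B - A) *ᵥ v = fun k => -(((A - B) *ᵥ v) k) := by
    funext k
    have h2 : B - A = -(A - B) := (neg_sub A B).symm
    rw [h2, Matrix.neg_mulVec]; rfl
  rw [h1, vnorm_neg]

lemma opNorm_sub_comm {K N : ℕ} (A B : Matrix (Fin K) (Fin N) ℂ) :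
    opNorm (A - B) = opNorm (B - A) := by
  unfold opNorm
  congr 1
  ext r
  constructor
  · rintro ⟨v, hv, rfl⟩
    exact ⟨v, hv, (vnorm_mulVec_sub_comm A B v)⟩
  · rintro ⟨v, hv, rfl⟩
    exact ⟨v, hv, (vnorm_mulVec_sub_comm B A v)⟩

lemma rankOne_mulVec {K N : ℕ} (u : Fin K → ℂ) (v : Fin N → ℂ) (w : Fin N → ℂ) :
    rankOne u v *ᵥ w = fun k => vinner v w * u k := by
  funext k
  rw [mulVec_entry, vinner, Finset.sum_mul]
  congr 1; funext j; simp [rankOne]; ring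

lemma opNorm_rankOne {K N : ℕ} (u : Fin K → ℂ) (v : Fin N → ℂ) :
    opNorm (rankOne u v) = vnorm u * vnorm v := by
  apply le_antisymm
  · apply opNorm_le
    intro w hw
    rw [rankOne_mulVec, vnorm_smul]
    · calc ‖vinner v w‖ * vnorm u ≤ (vnorm v * vnorm w) * vnorm u := by
            exact mul_le_mul_of_nonneg_right (vinner_le v w) (vnorm_nonneg u)
        _ ≤ (vnorm v * 1) * vnorm u := by
            have := mul_le_mul_of_nonneg_left hw (vnorm_nonneg v)
            exact mul_le_mul_of_nonneg_right this (vnorm_nonneg u)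
        _ = vnorm u * vnorm v := by ring
  · by_cases hv : vnorm v = 0
    · rw [hv, mul_zero]
      exact opNorm_nonneg' _
    · have hpos : 0 < vnorm v := lt_of_le_of_ne (vnorm_nonneg v) (Ne.symm hv)
      set c : ℝ := (vnorm v)⁻¹ with hc
      have hcpos : 0 < c := inv_pos.mpr hpos
      have hw : vnorm (fun j => (c:ℂ) * v j) = 1 := by
        rw [vnorm_smul, Complex.norm_real, Real.norm_eq_abs, abs_of_pos hcpos, hc,
          inv_mul_cancel₀ (ne_of_gt hpos)]
      apply le_csSup (opSet_bddAbove _)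
      refine ⟨fun j => (c:ℂ) * v j, le_of_eq hw, ?_⟩
      rw [rankOne_mulVec]
      have hvi : vinner v (fun j => (c:ℂ) * v j) = ((c * vnormSq v : ℝ) : ℂ) := by
        have : vinner v (fun j => (c:ℂ) * v j) = (c:ℂ) * vinner v v := by
          rw [vinner, vinner, Finset.mul_sum]
          congr 1; funext j; ring
        rw [this, vinner_self]
        push_cast; ring
      rw [vnorm_smul, hvi]
      have : ‖((c * vnormSq v : ℝ) : ℂ)‖ = c * vnormSq v := by
        rw [Complex.norm_real, Real.norm_eq_abs,
          abs_of_nonneg (mul_nonneg (le_of_lt hcpos) (vnormSq_nonneg v))]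
      rw [this]
      have hvv : c * vnormSq v = vnorm v := by
        rw [← vnorm_sq, hc, sq]
        field_simp
      rw [hvv]; ring

lemma rankOne_rank_le_one {K N : ℕ} (u : Fin K → ℂ) (v : Fin N → ℂ) :
    (rankOne u v).rank ≤ 1 := by
  have h : rankOne u v = Matrix.replicateCol (Fin 1) u * Matrix.replicateRow (Fin 1) (fun j => conj (v j)) := by
    ext k j
    simp [rankOne, Matrix.mul_apply, Matrix.replicateCol_apply, Matrix.replicateRow_apply]
  rw [h]
  calc (Matrix.replicateCol (Fin 1) u * Matrix.replicateRow (Fin 1) fun j => conj (v j)).rank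
      ≤ (Matrix.replicateCol (Fin 1) u).rank := Matrix.rank_mul_le_left _ _
    _ ≤ Fintype.card (Fin 1) := Matrix.rank_le_card_width _
    _ = 1 := by simp


set_option maxHeartbeats 2000000 in
/-- spectral perturbation for the best rank-one approximation. -/
theorem statement19
    {K N : ℕ} (hK : 0 < K) (hN : 0 < N)
    (h0 : Fin K → ℂ) (x0 : Fin N → ℂ) (d0 : ℝ) (hd0 : 0 < d0)
    (hh0 : vnorm h0 = Real.sqrt d0) (hx0 : vnorm x0 = Real.sqrt d0)
    (M : Matrix (Fin K) (Fin N) ℂ) (ξ : ℝ) (hξ0 : 0 ≤ ξ) (hξ1 : ξ ≤ 1 / 10)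
    (hM : opNorm (M - rankOne h0 x0) ≤ ξ * d0)
    (hh : Fin K → ℂ) (xh : Fin N → ℂ)
    (hhu : vnorm hh = 1) (xhu : vnorm xh = 1)
    (hbest : ∀ Z : Matrix (Fin K) (Fin N) ℂ, Z.rank ≤ 1 →
      opNorm (M - opNorm M • rankOne hh xh) ≤ opNorm (M - Z)) :
    |opNorm M - d0| ≤ ξ * d0
    ∧ opNorm (opNorm M • rankOne hh xh - rankOne h0 x0) ≤ 2 * ξ * d0
    ∧ vnorm (fun k => hh k - vinner h0 hh / ((d0 : ℝ) : ℂ) * h0 k) ≤ 2 * ξ := by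
  have hs0sq : Real.sqrt d0 ^ 2 = d0 := Real.sq_sqrt hd0.le
  have hR0 : opNorm (rankOne h0 x0) = d0 := by
    rw [opNorm_rankOne, hh0, hx0, ← sq, hs0sq]
  have htri1 : opNorm M ≤ ξ * d0 + d0 := by
    calc opNorm M = opNorm ((M - rankOne h0 x0) + rankOne h0 x0) := by rw [sub_add_cancel]
      _ ≤ opNorm (M - rankOne h0 x0) + opNorm (rankOne h0 x0) := opNorm_add_le _ _
      _ ≤ ξ * d0 + d0 := by rw [hR0]; exact add_le_add_left hM _
  have htri2 : d0 ≤ ξ * d0 + opNorm M := by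
    calc d0 = opNorm (rankOne h0 x0) := hR0.symm
      _ = opNorm ((rankOne h0 x0 - M) + M) := by rw [sub_add_cancel]
      _ ≤ opNorm (rankOne h0 x0 - M) + opNorm M := opNorm_add_le _ _
      _ = opNorm (M - rankOne h0 x0) + opNorm M := by rw [opNorm_sub_comm]
      _ ≤ ξ * d0 + opNorm M := add_le_add_left hM _
  have part1 : |opNorm M - d0| ≤ ξ * d0 := by
    rw [abs_le]; constructor <;> linarith
  have hbest0 := hbest (rankOne h0 x0) (rankOne_rank_le_one h0 x0)
  have part2 : opNorm (opNorm M • rankOne hh xh - rankOne h0 x0) ≤ 2 * ξ * d0 := by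
    have hsplit : opNorm M • rankOne hh xh - rankOne h0 x0 =
        (opNorm M • rankOne hh xh - M) + (M - rankOne h0 x0) := by abel
    calc opNorm (opNorm M • rankOne hh xh - rankOne h0 x0)
        = opNorm ((opNorm M • rankOne hh xh - M) + (M - rankOne h0 x0)) := by rw [← hsplit]
      _ ≤ opNorm (opNorm M • rankOne hh xh - M) + opNorm (M - rankOne h0 x0) :=
          opNorm_add_le _ _
      _ = opNorm (M - opNorm M • rankOne hh xh) + opNorm (M - rankOne h0 x0) := by
          rw [opNorm_sub_comm]
      _ ≤ opNorm (M - rankOne h0 x0) + opNorm (M - rankOne h0 x0) := add_le_add_left hbest0 _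
      _ ≤ ξ * d0 + ξ * d0 := add_le_add hM hM
      _ = 2 * ξ * d0 := by ring
  refine ⟨part1, part2, ?_⟩
  -- part (iii)
  set W : Matrix (Fin K) (Fin N) ℂ := opNorm M • rankOne hh xh - rankOne h0 x0 with hWdef
  set γ : ℂ := vinner h0 hh with hγ
  set P : Fin K → ℂ := fun k => hh k - γ / ((d0 : ℝ) : ℂ) * h0 k with hP
  show vnorm P ≤ 2 * ξ
  have hd0C : ((d0:ℝ):ℂ) ≠ 0 := by exact_mod_cast hd0.ne'
  have hx0Sq : vnormSq x0 = d0 := by rw [← vnorm_sq, hx0, hs0sq]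
  have hh0Sq : vnormSq h0 = d0 := by rw [← vnorm_sq, hh0, hs0sq]
  have haop : vnorm (W *ᵥ x0) ≤ 2 * ξ * d0 * Real.sqrt d0 := by
    calc vnorm (W *ᵥ x0) ≤ opNorm W * vnorm x0 := le_opNorm W x0
      _ ≤ (2 * ξ * d0) * Real.sqrt d0 := by
          rw [hx0]
          exact mul_le_mul_of_nonneg_right part2 (Real.sqrt_nonneg _)
  set μ : ℂ := ((opNorm M : ℝ) : ℂ) * vinner xh x0 with hμ
  have ha_fun : W *ᵥ x0 = fun k => μ * hh k - ((d0:ℝ):ℂ) * h0 k := by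
    rw [hWdef, Matrix.sub_mulVec, Matrix.smul_mulVec, rankOne_mulVec, rankOne_mulVec,
      vinner_self, hx0Sq]
    funext k
    simp only [Pi.sub_apply, Pi.smul_apply, Complex.real_smul, hμ]
    ring
  have hdecA : (fun k => ((d0:ℝ):ℂ) * ((W *ᵥ x0) k))
      = fun k => (((d0:ℝ):ℂ) * μ) * P k + (μ * γ - ((d0:ℝ):ℂ)^2) * h0 k := by
    funext k
    rw [ha_fun]
    simp only [hP]
    field_simp
    ring
  have haE : ((d0:ℝ):ℂ) • toE (W *ᵥ x0)
      = (((d0:ℝ):ℂ) * μ) • toE P + (μ * γ - ((d0:ℝ):ℂ)^2) • toE h0 :=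
    congrArg toE hdecA
  have hip_h0hh : ⟪toE h0, toE hh⟫_ℂ = γ := (vinner_eq h0 hh).symm
  have hip_h0h0 : ⟪toE h0, toE h0⟫_ℂ = ((d0:ℝ):ℂ) := by
    rw [← vinner_eq, vinner_self, hh0Sq]
  have hPE : toE P = toE hh - (γ / ((d0:ℝ):ℂ)) • toE h0 := rfl
  have horth : ⟪toE h0, toE P⟫_ℂ = 0 := by
    rw [hPE, inner_sub_right, inner_smul_right, hip_h0hh, hip_h0h0]
    field_simp
    ring
  have horth' : ⟪toE P, toE h0⟫_ℂ = 0 := by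
    rw [← inner_conj_symm, horth]; simp
  have hhhE : ‖toE hh‖ = 1 := by rw [← vnorm_eq, hhu]
  have hh0E : ‖toE h0‖ = Real.sqrt d0 := by rw [← vnorm_eq, hh0]
  set S : ℝ := ‖toE P‖ with hS
  set g : ℝ := ‖γ‖ with hg
  set m : ℝ := ‖μ‖ with hm
  have hdecomp : toE hh = toE P + (γ / ((d0:ℝ):ℂ)) • toE h0 := by
    rw [hPE]; abel
  -- Pythagoras
  have hPy : d0 = d0 * S^2 + g^2 := by
    have h1 := norm_add_sq (𝕜 := ℂ) (toE P) ((γ / ((d0:ℝ):ℂ)) • toE h0)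
    rw [← hdecomp, hhhE] at h1
    have hz : ⟪toE P, (γ / ((d0:ℝ):ℂ)) • toE h0⟫_ℂ = 0 := by
      rw [inner_smul_right, horth', mul_zero]
    rw [hz, map_zero, norm_smul, hh0E] at h1
    have hnn : ‖γ / ((d0:ℝ):ℂ)‖ = g / d0 := by
      rw [norm_div, Complex.norm_real, Real.norm_eq_abs, abs_of_pos hd0]
    rw [hnn] at h1
    -- h1 : 1^2 = S^2 + 2*0 + (g/d0 * √d0)^2
    have h2 : (g / d0 * Real.sqrt d0)^2 = g^2 / d0 := by
      rw [mul_pow, hs0sq]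
      field_simp
    rw [h2, ← hS] at h1
    have h3 : (1:ℝ) = S^2 + g^2/d0 := by linarith [h1]
    calc d0 = d0 * 1 := (mul_one d0).symm
      _ = d0 * (S^2 + g^2/d0) := by rw [← h3]
      _ = d0 * S^2 + d0 * (g^2/d0) := by ring
      _ = d0 * S^2 + g^2 := by rw [mul_div_cancel₀ _ hd0.ne']
  -- norm of decomposed vector
  set B : ℝ := ‖μ * γ - ((d0:ℝ):ℂ)^2‖ with hB
  have hda : ‖((d0:ℝ):ℂ)‖ = d0 := by
    rw [Complex.norm_real, Real.norm_eq_abs, abs_of_pos hd0]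
  have hnormsq : (d0 * ‖toE (W *ᵥ x0)‖)^2 = (d0 * m * S)^2 + B^2 * d0 := by
    have h1 := norm_add_sq (𝕜 := ℂ) ((((d0:ℝ):ℂ) * μ) • toE P)
      ((μ * γ - ((d0:ℝ):ℂ)^2) • toE h0)
    rw [← haE] at h1
    have hz : ⟪(((d0:ℝ):ℂ) * μ) • toE P, (μ * γ - ((d0:ℝ):ℂ)^2) • toE h0⟫_ℂ = 0 := by
      rw [inner_smul_left, inner_smul_right, horth']
      ring
    rw [hz, map_zero] at h1
    have l1 : ‖((d0:ℝ):ℂ) • toE (W *ᵥ x0)‖ = d0 * ‖toE (W *ᵥ x0)‖ := by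
      rw [norm_smul, hda]
    have l2 : ‖(((d0:ℝ):ℂ) * μ) • toE P‖ = d0 * m * S := by
      rw [norm_smul, norm_mul, hda, ← hm, ← hS]
    have l3 : ‖(μ * γ - ((d0:ℝ):ℂ)^2) • toE h0‖ = B * Real.sqrt d0 := by
      rw [norm_smul, hh0E, ← hB]
    rw [l1, l2, l3] at h1
    rw [h1, mul_pow B (Real.sqrt d0), hs0sq]
    ring
  have hBge : |m * g - d0^2| ≤ B := by
    have h1 := abs_norm_sub_norm_le (μ * γ) (((d0:ℝ):ℂ)^2)
    have h2 : ‖μ * γ‖ = m * g := norm_mul μ γ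
    have h3 : ‖((d0:ℝ):ℂ)^2‖ = d0^2 := by
      rw [norm_pow, Complex.norm_real, Real.norm_eq_abs, abs_of_pos hd0]
    rw [h2, h3] at h1
    exact h1
  have hBsq : (m * g - d0^2)^2 ≤ B^2 := by
    calc (m * g - d0^2)^2 = |m * g - d0^2|^2 := (sq_abs _).symm
      _ ≤ B^2 := by
          have hb0 : (0:ℝ) ≤ B := norm_nonneg _
          nlinarith [abs_nonneg (m * g - d0^2)]
  have he1 : (d0 * m * S)^2 + B^2 * d0 ≤ 4 * ξ^2 * d0^5 := by
    have h1 : d0 * ‖toE (W *ᵥ x0)‖ ≤ d0 * (2 * ξ * d0 * Real.sqrt d0) := by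
      apply mul_le_mul_of_nonneg_left _ hd0.le
      rw [← vnorm_eq]
      exact haop
    have h2 : (d0 * ‖toE (W *ᵥ x0)‖)^2 ≤ (d0 * (2 * ξ * d0 * Real.sqrt d0))^2 := by
      have hnn : 0 ≤ d0 * ‖toE (W *ᵥ x0)‖ := mul_nonneg hd0.le (norm_nonneg _)
      nlinarith
    rw [hnormsq] at h2
    have h3 : (d0 * (2 * ξ * d0 * Real.sqrt d0))^2 = 4 * ξ^2 * d0^5 := by
      rw [mul_pow, mul_pow, hs0sq]
      ring
    linarith [h2, h3.le, h3.ge]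
  have hS0 : (0:ℝ) ≤ S := norm_nonneg _
  have hm0 : (0:ℝ) ≤ m := norm_nonneg _
  have hg0 : (0:ℝ) ≤ g := norm_nonneg _
  have key5 : d0^5 * S^2 ≤ 4 * ξ^2 * d0^5 := by
    have hZ : d0 - d0 * S^2 - g^2 = 0 := by linarith
    have e : d0^2*m^2*S^2 + (m*g - d0^2)^2*d0 - d0^5*S^2 - d0^2*(m - g*d0)^2
        = (d0^4 - d0*m^2) * (d0 - d0*S^2 - g^2) := by ring
    rw [hZ, mul_zero] at e
    have h6 : (m * g - d0^2)^2 * d0 ≤ B^2 * d0 := mul_le_mul_of_nonneg_right hBsq hd0.le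
    have a1 : (d0*m*S)^2 = d0^2*m^2*S^2 := by ring
    rw [a1] at he1
    have h7 : (0:ℝ) ≤ d0^2*(m - g*d0)^2 :=
      mul_nonneg (sq_nonneg d0) (sq_nonneg (m - g*d0))
    linarith
  have key : S^2 ≤ 4 * ξ^2 := by
    have h5 : (0:ℝ) < d0^5 := by positivity
    have k2 : d0^5 * S^2 ≤ d0^5 * (4*ξ^2) := by linarith
    have := le_of_mul_le_mul_left k2 h5
    linarith
  have final : S ≤ 2 * ξ := by nlinarith [key, hS0, hξ0]
  rw [vnorm_eq]
  exact final



end RGD
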